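/- Let A be a 2×2 positive definite complex matrix and let P, R be 2×2 positive semidefinite complex matrices. Then tr(A·R²)·tr(A^{−1}·P²) ≥ ‖P·R‖_tr², where ‖X‖_tr = tr(√(X†X)) is the trace norm. -/

import Mathlib

open Matrix Kronecker Complex
open scoped ComplexOrder

abbrev Q2 : Type := Fin 2 × Fin 2
abbrev Q3 : Type := Fin 2 × Fin 2 × Fin 2

noncomputable section

/-- A two-qubit state: positive semidefinite with trace one. -/
def IsState2 (ρ : Matrix Q2 Q2 ℂ) : Prop := ρ.PosSemidef ∧ ρ.trace = 1

/-- A three-qubit state: positive semidefinite with trace one. -/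
def IsState3 (ρ : Matrix Q3 Q3 ℂ) : Prop := ρ.PosSemidef ∧ ρ.trace = 1

/-- Partial trace over the first qubit (system A) of a two-qubit operator. -/
def ptraceA (ρ : Matrix Q2 Q2 ℂ) : Matrix (Fin 2) (Fin 2) ℂ :=
  Matrix.of fun b b' => ∑ a, ρ (a, b) (a, b')

/-- Partial trace over the middle qubit (system B) of a three-qubit operator;
the result is indexed by the systems (A, B'). -/
def ptraceB3 (ρ : Matrix Q3 Q3 ℂ) : Matrix Q2 Q2 ℂ :=
  Matrix.of fun p q => ∑ b, ρ (p.1, b, p.2) (q.1, b, q.2)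

/-- Partial trace over the last qubit (system B') of a three-qubit operator;
the result is indexed by the systems (A, B). -/
def ptraceB'3 (ρ : Matrix Q3 Q3 ℂ) : Matrix Q2 Q2 ℂ :=
  Matrix.of fun p q => ∑ c, ρ (p.1, p.2, c) (q.1, q.2, c)

/-- A two-qubit state admits a symmetric extension if there is a three-qubit state whose
AB and AB' marginals both equal it. -/
def SymExt (ρ : Matrix Q2 Q2 ℂ) : Prop :=
  ∃ τ : Matrix Q3 Q3 ℂ, IsState3 τ ∧ ptraceB'3 τ = ρ ∧ ptraceB3 τ = ρ

/-- f(ρ) = tr(ρ_B²) − tr(ρ²) + 4√(det ρ). -/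
def fC (ρ : Matrix Q2 Q2 ℂ) : ℝ :=
  ((ptraceA ρ * ptraceA ρ).trace).re - ((ρ * ρ).trace).re + 4 * Real.sqrt ρ.det.re

/-- The rank-one projector |ψ⟩⟨ψ|. -/
def proj {n : Type*} (ψ : n → ℂ) : Matrix n n ℂ := Matrix.vecMulVec ψ (star ψ)

/-- A two-qubit state admits a pure symmetric extension. -/
def PureSymExt (ρ : Matrix Q2 Q2 ℂ) : Prop :=
  ∃ ψ : Q3 → ℂ, (∑ x, Complex.normSq (ψ x)) = 1 ∧
    ptraceB'3 (proj ψ) = ρ ∧ ptraceB3 (proj ψ) = ρ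

/-- The multiset of nonzero eigenvalues (with multiplicity) of a complex matrix. -/
def nonzeroSpec {n : Type*} [Fintype n] [DecidableEq n] (M : Matrix n n ℂ) : Multiset ℂ :=
  M.charpoly.roots.filter (· ≠ 0)

/-- The trace norm ‖X‖_tr = tr √(X†X) of a 2×2 complex matrix. -/
def trNorm (X : Matrix (Fin 2) (Fin 2) ℂ) : ℝ :=
  ((((Matrix.posSemidef_conjTranspose_mul_self X).1.eigenvectorUnitary : Matrix (Fin 2) (Fin 2) ℂ) *
      diagonal ((fun r : ℝ => (r : ℂ)) ∘ (√·) ∘ (Matrix.posSemidef_conjTranspose_mul_self X).1.eigenvalues) *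
      (star (Matrix.posSemidef_conjTranspose_mul_self X).1.eigenvectorUnitary :
        Matrix (Fin 2) (Fin 2) ℂ)).trace).re

/-- The supporting-hyperplane observable H_AB(σ) = √(det σ)·σ⁻¹ − σ + I₂⊗σ_B. -/
def HAB (σ : Matrix Q2 Q2 ℂ) : Matrix Q2 Q2 ℂ :=
  ((Real.sqrt σ.det.re : ℝ) : ℂ) • σ⁻¹ - σ + (1 : Matrix (Fin 2) (Fin 2) ℂ) ⊗ₖ ptraceA σ

namespace TraceCS

lemma sqrtM_spec (X : Matrix (Fin 2) (Fin 2) ℂ) (hX : X.PosSemidef) :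
    ((hX.1.eigenvectorUnitary : Matrix (Fin 2) (Fin 2) ℂ) *
      diagonal ((fun r : ℝ => (r : ℂ)) ∘ (√·) ∘ hX.1.eigenvalues) *
      (star hX.1.eigenvectorUnitary : Matrix (Fin 2) (Fin 2) ℂ)).PosSemidef ∧
    ((hX.1.eigenvectorUnitary : Matrix (Fin 2) (Fin 2) ℂ) *
      diagonal ((fun r : ℝ => (r : ℂ)) ∘ (√·) ∘ hX.1.eigenvalues) *
      (star hX.1.eigenvectorUnitary : Matrix (Fin 2) (Fin 2) ℂ)) *
    ((hX.1.eigenvectorUnitary : Matrix (Fin 2) (Fin 2) ℂ) *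
      diagonal ((fun r : ℝ => (r : ℂ)) ∘ (√·) ∘ hX.1.eigenvalues) *
      (star hX.1.eigenvectorUnitary : Matrix (Fin 2) (Fin 2) ℂ)) = X := by
  have hU : (star hX.1.eigenvectorUnitary : Matrix (Fin 2) (Fin 2) ℂ) *
      (hX.1.eigenvectorUnitary : Matrix (Fin 2) (Fin 2) ℂ) = 1 :=
    Matrix.mem_unitaryGroup_iff'.mp hX.1.eigenvectorUnitary.2
  constructor
  · have hD : (diagonal ((fun r : ℝ => (r : ℂ)) ∘ (√·) ∘ hX.1.eigenvalues)).PosSemidef := by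
      rw [posSemidef_diagonal_iff]
      intro i
      simp only [Function.comp_apply]
      exact_mod_cast Real.sqrt_nonneg _
    have := hD.mul_mul_conjTranspose_same (hX.1.eigenvectorUnitary : Matrix (Fin 2) (Fin 2) ℂ)
    simpa [Matrix.star_eq_conjTranspose] using this
  · have hsp := hX.1.spectral_theorem
    rw [Unitary.conjStarAlgAut_apply] at hsp
    conv_rhs => rw [hsp]
    have hDD : diagonal ((fun r : ℝ => (r : ℂ)) ∘ (√·) ∘ hX.1.eigenvalues) *
        diagonal ((fun r : ℝ => (r : ℂ)) ∘ (√·) ∘ hX.1.eigenvalues) =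
        diagonal (RCLike.ofReal ∘ hX.1.eigenvalues) := by
      rw [diagonal_mul_diagonal]
      congr 1
      funext i
      simp only [Function.comp_apply]
      rw [← Complex.ofReal_mul, Real.mul_self_sqrt (hX.eigenvalues_nonneg i)]
      rfl
    calc _ = (hX.1.eigenvectorUnitary : Matrix (Fin 2) (Fin 2) ℂ) *
          diagonal ((fun r : ℝ => (r : ℂ)) ∘ (√·) ∘ hX.1.eigenvalues) *
          ((star hX.1.eigenvectorUnitary : Matrix (Fin 2) (Fin 2) ℂ) *
          (hX.1.eigenvectorUnitary : Matrix (Fin 2) (Fin 2) ℂ)) *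
          diagonal ((fun r : ℝ => (r : ℂ)) ∘ (√·) ∘ hX.1.eigenvalues) *
          (star hX.1.eigenvectorUnitary : Matrix (Fin 2) (Fin 2) ℂ) := by
            simp only [Matrix.mul_assoc]
      _ = _ := by
            rw [hU, Matrix.mul_one, Matrix.mul_assoc _ _ (diagonal _), hDD]

lemma psd_entry_nonneg (Q : Matrix (Fin 2) (Fin 2) ℂ) (hQ : Q.PosSemidef) (i : Fin 2) :
    0 ≤ Q i i := by
  exact hQ.diag_nonneg

lemma psd_det_nonneg (Q : Matrix (Fin 2) (Fin 2) ℂ) (hQ : Q.PosSemidef) : 0 ≤ Q.det := by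
  rw [hQ.1.det_eq_prod_eigenvalues]
  refine Finset.prod_nonneg fun i _ => ?_
  rw [RCLike.nonneg_iff]
  simp [hQ.eigenvalues_nonneg i]

lemma ch_trace (Q : Matrix (Fin 2) (Fin 2) ℂ) :
    Q.trace ^ 2 = (Q * Q).trace + 2 * Q.det := by
  simp [Matrix.trace_fin_two, Matrix.det_fin_two, Matrix.mul_apply, Fin.sum_univ_two]
  ring

lemma trNorm_sq (M : Matrix (Fin 2) (Fin 2) ℂ) :
    trNorm M ^ 2 = ((Mᴴ * M).trace).re + 2 * Real.sqrt ((Mᴴ * M).det.re) := by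
  have hS := Matrix.posSemidef_conjTranspose_mul_self M
  set Q := ((hS.1.eigenvectorUnitary : Matrix (Fin 2) (Fin 2) ℂ) *
      diagonal ((fun r : ℝ => (r : ℂ)) ∘ (√·) ∘ hS.1.eigenvalues) *
      (star hS.1.eigenvectorUnitary : Matrix (Fin 2) (Fin 2) ℂ)) with hQdef
  have hQpsd : Q.PosSemidef := (sqrtM_spec _ hS).1
  have hQQ : Q * Q = Mᴴ * M := (sqrtM_spec _ hS).2
  have htr0 : 0 ≤ Q.trace := by
    rw [Matrix.trace_fin_two]
    exact add_nonneg (psd_entry_nonneg Q hQpsd 0) (psd_entry_nonneg Q hQpsd 1)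
  have hdet0 : 0 ≤ Q.det := psd_det_nonneg Q hQpsd
  rw [Complex.nonneg_iff] at htr0 hdet0
  have hid := ch_trace Q
  rw [hQQ] at hid
  have hre : (Q.trace ^ 2).re = Q.trace.re ^ 2 := by
    rw [sq, sq, Complex.mul_re, ← htr0.2]
    ring
  have hdet2 : Q.det * Q.det = (Mᴴ * M).det := by rw [← hQQ, Matrix.det_mul Q Q]
  have hdre : (Mᴴ * M).det.re = Q.det.re * Q.det.re := by
    rw [← hdet2, Complex.mul_re, ← hdet0.2]
    ring
  have hsqrt : Real.sqrt ((Mᴴ * M).det.re) = Q.det.re := by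
    rw [hdre, Real.sqrt_mul_self hdet0.1]
  have h : trNorm M = Q.trace.re := rfl
  rw [h, hsqrt, ← hre, hid]
  simp

lemma scalar_core (p q r s x a1 b1 sa sb : ℝ) (hp : 0 ≤ p) (hq : 0 ≤ q) (hr : 0 ≤ r) (hs : 0 ≤ s)
    (ha1 : 0 ≤ a1) (hb1 : 0 ≤ b1) (hsa : 0 ≤ sa) (hsb : 0 ≤ sb)
    (hx : x ≤ a1 * b1) (hpq : p * q = a1 ^ 2 + sa ^ 2) (hrs : r * s = b1 ^ 2 + sb ^ 2) :
    p * s + q * r ≥ 2 * x + 2 * (sa * sb) := by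
  have hprod : (p * s) * (q * r) = (a1 ^ 2 + sa ^ 2) * (b1 ^ 2 + sb ^ 2) := by
    rw [show (p * s) * (q * r) = (p * q) * (r * s) by ring, hpq, hrs]
  have hA : (p * s + q * r) ^ 2 ≥ 4 * (a1 * b1 + sa * sb) ^ 2 := by
    nlinarith [sq_nonneg (p * s - q * r), sq_nonneg (a1 * sb - b1 * sa), hprod]
  have h0 : 0 ≤ p * s + q * r := by positivity
  have hB : 0 ≤ a1 * b1 + sa * sb := by positivity
  nlinarith [hA, h0, hB, hx, mul_nonneg hsa hsb]

lemma key (S T : Matrix (Fin 2) (Fin 2) ℂ) (hS : S.PosSemidef) (hT : T.PosSemidef) :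
    S.trace.re * T.trace.re ≥ ((S * T).trace).re + 2 * Real.sqrt (S.det.re * T.det.re) := by
  have hS10 : S 1 0 = (starRingEnd ℂ) (S 0 1) := by
    conv_lhs => rw [← hS.1]
    rfl
  have hT10 : T 1 0 = (starRingEnd ℂ) (T 0 1) := by
    conv_lhs => rw [← hT.1]
    rfl
  have hS00 := psd_entry_nonneg S hS 0
  have hS11 := psd_entry_nonneg S hS 1
  have hT00 := psd_entry_nonneg T hT 0
  have hT11 := psd_entry_nonneg T hT 1
  rw [Complex.nonneg_iff] at hS00 hS11 hT00 hT11
  have hdS := psd_det_nonneg S hS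
  have hdT := psd_det_nonneg T hT
  rw [Complex.nonneg_iff] at hdS hdT
  set p := (S 0 0).re; set q := (S 1 1).re; set r := (T 0 0).re; set s := (T 1 1).re
  set z := S 0 1 with hz; set w := T 0 1 with hw
  have hdetS : S.det.re = p * q - (z.re ^ 2 + z.im ^ 2) := by
    rw [Matrix.det_fin_two, hS10]
    simp [Complex.mul_re, ← hS00.2, ← hS11.2]
    ring
  have hdetT : T.det.re = r * s - (w.re ^ 2 + w.im ^ 2) := by
    rw [Matrix.det_fin_two, hT10]
    simp [Complex.mul_re, ← hT00.2, ← hT11.2]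
    ring
  have htrS : S.trace.re = p + q := by rw [Matrix.trace_fin_two]; simp; rfl
  have htrT : T.trace.re = r + s := by rw [Matrix.trace_fin_two]; simp; rfl
  have htrST : ((S * T).trace).re = p * r + q * s + 2 * (z * (starRingEnd ℂ) w).re := by
    rw [Matrix.trace_fin_two]
    simp [Matrix.mul_apply, Fin.sum_univ_two, hS10, hT10, Complex.mul_re,
      ← hS00.2, ← hS11.2, ← hT00.2, ← hT11.2]
    ring
  set x := (z * (starRingEnd ℂ) w).re with hxdef
  have hx : x ≤ ‖z‖ * ‖w‖ := by
    calc x ≤ ‖z * (starRingEnd ℂ) w‖ := Complex.re_le_norm _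
    _ = ‖z‖ * ‖w‖ := by rw [norm_mul, Complex.norm_conj]
  set sa := Real.sqrt (S.det.re) with hsadef
  set sb := Real.sqrt (T.det.re) with hsbdef
  have hsa : 0 ≤ sa := Real.sqrt_nonneg _
  have hsb : 0 ≤ sb := Real.sqrt_nonneg _
  have hsa2 : sa ^ 2 = S.det.re := Real.sq_sqrt hdS.1
  have hsb2 : sb ^ 2 = T.det.re := Real.sq_sqrt hdT.1
  have hsqrt : Real.sqrt (S.det.re * T.det.re) = sa * sb := Real.sqrt_mul hdS.1 _
  rw [hsqrt, htrS, htrT, htrST]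
  have hpq : p * q = ‖z‖ ^ 2 + sa ^ 2 := by
    rw [hsa2, hdetS, Complex.sq_norm, Complex.normSq_apply]; ring
  have hrs : r * s = ‖w‖ ^ 2 + sb ^ 2 := by
    rw [hsb2, hdetT, Complex.sq_norm, Complex.normSq_apply]; ring
  have hp : 0 ≤ p := hS00.1
  have hq : 0 ≤ q := hS11.1
  have hr : 0 ≤ r := hT00.1
  have hs : 0 ≤ s := hT11.1
  have ha1 : 0 ≤ ‖z‖ := norm_nonneg _
  have hb1 : 0 ≤ ‖w‖ := norm_nonneg _
  have hcore := scalar_core p q r s x (‖z‖) (‖w‖) sa sb hp hq hr hs ha1 hb1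
    hsa hsb hx hpq hrs
  nlinarith [hcore]

end TraceCS

/-- Cauchy–Schwarz-type inequality: tr(A·R²)·tr(A⁻¹·P²) ≥ ‖PR‖_tr² for A positive
definite and P, R positive semidefinite 2×2 matrices. -/

theorem trace_cauchy_schwarz (A P R : Matrix (Fin 2) (Fin 2) ℂ)
    (hA : A.PosDef) (hP : P.PosSemidef) (hR : R.PosSemidef) :
    ((A * (R * R)).trace).re * ((A⁻¹ * (P * P)).trace).re ≥ trNorm (P * R) ^ 2 := by
  classical
  have hPsd := hA.posSemidef
  set B := ((hPsd.1.eigenvectorUnitary : Matrix (Fin 2) (Fin 2) ℂ) *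
      diagonal ((fun r : ℝ => (r : ℂ)) ∘ (√·) ∘ hPsd.1.eigenvalues) *
      (star hPsd.1.eigenvectorUnitary : Matrix (Fin 2) (Fin 2) ℂ)) with hBdef
  have hBpsd : B.PosSemidef := (TraceCS.sqrtM_spec _ hPsd).1
  have hBB : B * B = A := (TraceCS.sqrtM_spec _ hPsd).2
  have hdetB : B.det ≠ 0 := by
    intro h
    have hA0 : A.det = 0 := by rw [← hBB, Matrix.det_mul, h, mul_zero]
    exact hA.det_pos.ne' hA0
  have hBiB : B⁻¹ * B = 1 := Matrix.nonsing_inv_mul B (Ne.isUnit hdetB)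
  have hBBi : B * B⁻¹ = 1 := Matrix.mul_nonsing_inv B (Ne.isUnit hdetB)
  have hBiH : (B⁻¹).IsHermitian := hBpsd.1.inv
  set S := B⁻¹ * (P * P) * B⁻¹ with hSdef
  set T := B * (R * R) * B with hTdef
  have hSpsd : S.PosSemidef := by
    have h : S = (P * B⁻¹)ᴴ * (P * B⁻¹) := by
      rw [hSdef, Matrix.conjTranspose_mul, hBiH, hP.1]
      simp only [Matrix.mul_assoc]
    rw [h]
    exact Matrix.posSemidef_conjTranspose_mul_self _
  have hTpsd : T.PosSemidef := by
    have h : T = (R * B)ᴴ * (R * B) := by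
      rw [hTdef, Matrix.conjTranspose_mul, hBpsd.1, hR.1]
      simp only [Matrix.mul_assoc]
    rw [h]
    exact Matrix.posSemidef_conjTranspose_mul_self _
  have htrT : T.trace = (A * (R * R)).trace := by
    rw [hTdef, Matrix.trace_mul_cycle, hBB]
  have hAinv : B⁻¹ * B⁻¹ = A⁻¹ := by rw [← Matrix.mul_inv_rev, hBB]
  have htrS : S.trace = (A⁻¹ * (P * P)).trace := by
    rw [hSdef, Matrix.trace_mul_cycle, hAinv]
  have h2 : (S * T).trace = ((P * P) * (R * R)).trace := by
    have hc : B⁻¹ * (B * (R * (R * B))) = R * (R * B) := by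
      rw [← Matrix.mul_assoc, hBiB, Matrix.one_mul]
    calc (S * T).trace = (B⁻¹ * (P * (P * (R * (R * B))))).trace := by
          rw [hSdef, hTdef]
          simp only [Matrix.mul_assoc, hc]
      _ = ((P * (P * (R * (R * B)))) * B⁻¹).trace := Matrix.trace_mul_comm _ _
      _ = ((P * P) * (R * R)).trace := by
          simp only [Matrix.mul_assoc]
          rw [hBBi, Matrix.mul_one]
  have htrM : ((P * R)ᴴ * (P * R)).trace = ((P * P) * (R * R)).trace := by
    rw [Matrix.conjTranspose_mul, hP.1, hR.1]
    rw [show (R * P) * (P * R) = R * (P * P) * R by simp only [Matrix.mul_assoc]]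
    rw [Matrix.trace_mul_cycle]
    exact Matrix.trace_mul_comm _ _
  -- determinants
  have hdet1 : B⁻¹.det * B.det = 1 := by rw [← Matrix.det_mul, hBiB, Matrix.det_one]
  have hdetprod : S.det * T.det = (P.det * R.det) ^ 2 := by
    have h : S.det * T.det = (B⁻¹.det * B.det) ^ 2 * (P.det * R.det) ^ 2 := by
      simp only [hSdef, hTdef, Matrix.det_mul]
      ring
    rw [h, hdet1]
    ring
  have hreal : ∀ (Q : Matrix (Fin 2) (Fin 2) ℂ), Q.PosSemidef → ∃ c : ℝ, 0 ≤ c ∧ Q.det = (c : ℂ) := by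
    intro Q hQ
    have h := TraceCS.psd_det_nonneg Q hQ
    rw [Complex.nonneg_iff] at h
    exact ⟨Q.det.re, h.1, Complex.ext rfl (by simp [← h.2])⟩
  obtain ⟨pd, hpd0, hPeq⟩ := hreal P hP
  obtain ⟨rd, hrd0, hReq⟩ := hreal R hR
  obtain ⟨sd, hsd0, hSeq⟩ := hreal S hSpsd
  obtain ⟨td, htd0, hTeq⟩ := hreal T hTpsd
  rw [hSeq, hTeq, hPeq, hReq] at hdetprod
  have h3 : sd * td = (pd * rd) ^ 2 := by exact_mod_cast hdetprod
  have hstar : star ((pd : ℂ) * (rd : ℂ)) = (pd : ℂ) * (rd : ℂ) := by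
    rw [star_mul']
    simp [Complex.conj_ofReal]
  have hdetM : ((P * R)ᴴ * (P * R)).det = ((pd * rd : ℝ) : ℂ) ^ 2 := by
    rw [Matrix.det_mul, Matrix.det_conjTranspose, Matrix.det_mul, hPeq, hReq, hstar]
    push_cast
    ring
  have hdetMre : ((P * R)ᴴ * (P * R)).det.re = (pd * rd) ^ 2 := by
    rw [hdetM, ← Complex.ofReal_pow]
    exact Complex.ofReal_re _
  have hpr0 : 0 ≤ pd * rd := mul_nonneg hpd0 hrd0
  have hSre : S.det.re = sd := by rw [hSeq]; exact Complex.ofReal_re _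
  have hTre : T.det.re = td := by rw [hTeq]; exact Complex.ofReal_re _
  have hkey := TraceCS.key S T hSpsd hTpsd
  rw [hSre, hTre, h3, Real.sqrt_sq hpr0] at hkey
  rw [ge_iff_le, TraceCS.trNorm_sq, hdetMre, Real.sqrt_sq hpr0, htrM, ← h2, ← htrS, ← htrT]
  nlinarith [hkey]
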